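/- K(1/√2) = Γ(1/4)² / (4√π). -/

import Mathlib

open Real

noncomputable def ellK (k : ℝ) : ℝ :=
  ∫ θ in (0 : ℝ)..(π / 2), 1 / Real.sqrt (1 - k ^ 2 * Real.sin θ ^ 2)

noncomputable def ellE (k : ℝ) : ℝ :=
  ∫ θ in (0 : ℝ)..(π / 2), Real.sqrt (1 - k ^ 2 * Real.sin θ ^ 2)

open MeasureTheory Set in
lemma beta_quarter_half :
    ∫ x in Ioo (0:ℝ) 1, x ^ (-3/4 : ℝ) * (1 - x) ^ (-1/2 : ℝ)
      = Real.Gamma (1/4) * Real.Gamma (1/2) / Real.Gamma (3/4) := by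
  have h := Complex.Gamma_mul_Gamma_eq_betaIntegral (s := 1/4) (t := 1/2)
    (by norm_num) (by norm_num)
  have hbeta : Complex.betaIntegral (1/4) (1/2)
      = ((∫ x in Ioo (0:ℝ) 1, x ^ (-3/4 : ℝ) * (1 - x) ^ (-1/2 : ℝ) : ℝ) : ℂ) := by
    rw [Complex.betaIntegral]
    rw [intervalIntegral.integral_of_le (by norm_num : (0:ℝ) ≤ 1),
      MeasureTheory.integral_Ioc_eq_integral_Ioo]
    calc ∫ t in Ioo (0:ℝ) 1, (t:ℂ) ^ (1/4 - 1 : ℂ) * (1 - (t:ℂ)) ^ (1/2 - 1 : ℂ)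
        = ∫ t in Ioo (0:ℝ) 1, ((t ^ (-3/4 : ℝ) * (1 - t) ^ (-1/2 : ℝ) : ℝ) : ℂ) := by
          refine setIntegral_congr_fun measurableSet_Ioo (fun x hx => ?_)
          obtain ⟨hx0, hx1⟩ := hx
          rw [Complex.ofReal_mul, Complex.ofReal_cpow hx0.le,
            Complex.ofReal_cpow (by linarith : (0:ℝ) ≤ 1 - x)]
          push_cast
          norm_num
      _ = _ := integral_ofReal
  have h34 : Real.Gamma (3/4) ≠ 0 := (Real.Gamma_pos_of_pos (by norm_num)).ne'
  rw [hbeta, show (1/4+1/2:ℂ) = ((3/4:ℝ):ℂ) by norm_num, Complex.Gamma_ofReal,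
    show (1/4:ℂ) = ((1/4:ℝ):ℂ) by norm_num, Complex.Gamma_ofReal,
    show (1/2:ℂ) = ((1/2:ℝ):ℂ) by norm_num, Complex.Gamma_ofReal] at h
  have h' : Real.Gamma (1/4) * Real.Gamma (1/2)
      = Real.Gamma (3/4) * ∫ x in Ioo (0:ℝ) 1, x ^ (-3/4 : ℝ) * (1 - x) ^ (-1/2 : ℝ) := by
    exact_mod_cast h
  rw [eq_div_iff h34]
  linarith [h']

open MeasureTheory Set in
lemma cov_step :
    ∫ θ in Ioo (0:ℝ) (π/2), 1 / Real.sqrt (1 - (1 / Real.sqrt 2) ^ 2 * Real.sin θ ^ 2)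
      = ∫ t in Ioo (0:ℝ) 1, (Real.sqrt 2 / 4) * (t ^ (-3/4 : ℝ) * (1 - t) ^ (-1/2 : ℝ)) := by
  have himg : (fun θ : ℝ => cos θ ^ 4) '' Ioo 0 (π/2) = Ioo (0:ℝ) 1 := by
    ext t
    constructor
    · rintro ⟨θ, ⟨h0, h2⟩, rfl⟩
      have hc : 0 < cos θ := cos_pos_of_mem_Ioo ⟨by linarith [pi_pos], h2⟩
      have hs : 0 < sin θ := sin_pos_of_pos_of_lt_pi h0 (by linarith [pi_pos])
      have hc1 : cos θ < 1 := by nlinarith [sin_sq_add_cos_sq θ]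
      exact ⟨by positivity, pow_lt_one₀ hc.le hc1 (by norm_num)⟩
    · rintro ⟨ht0, ht1⟩
      have hu0 : 0 < t ^ (1/4 : ℝ) := Real.rpow_pos_of_pos ht0 _
      have hu1 : t ^ (1/4 : ℝ) < 1 := Real.rpow_lt_one ht0.le ht1 (by norm_num)
      refine ⟨arccos (t ^ (1/4 : ℝ)), ⟨Real.arccos_pos.2 hu1,
        Real.arccos_lt_pi_div_two.2 hu0⟩, ?_⟩
      show cos (arccos (t ^ (1/4:ℝ))) ^ 4 = t
      rw [Real.cos_arccos (by linarith) hu1.le, ← Real.rpow_natCast (t ^ (1/4:ℝ)) 4,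
        ← Real.rpow_mul ht0.le]
      norm_num
  have hinj : InjOn (fun θ : ℝ => cos θ ^ 4) (Ioo 0 (π/2)) := by
    intro a ha b hb hab
    have hca : 0 ≤ cos a := (cos_pos_of_mem_Ioo ⟨by linarith [pi_pos, ha.1], ha.2⟩).le
    have hcb : 0 ≤ cos b := (cos_pos_of_mem_Ioo ⟨by linarith [pi_pos, hb.1], hb.2⟩).le
    have hcc : cos a = cos b :=
      (pow_left_strictMonoOn₀ (n := 4) (by norm_num)).injOn hca hcb hab
    exact Real.injOn_cos ⟨ha.1.le, by linarith [pi_pos, ha.2]⟩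
      ⟨hb.1.le, by linarith [pi_pos, hb.2]⟩ hcc
  have hderiv : ∀ x ∈ Ioo (0:ℝ) (π/2),
      HasDerivWithinAt (fun θ : ℝ => cos θ ^ 4) (4 * cos x ^ 3 * (-sin x)) (Ioo 0 (π/2)) x := by
    intro x _
    have := ((Real.hasDerivAt_cos x).pow 4).hasDerivWithinAt (s := Ioo (0:ℝ) (π/2))
    exact this
  have key := integral_image_eq_integral_abs_deriv_smul measurableSet_Ioo hderiv hinj
    (fun t => (Real.sqrt 2 / 4) * (t ^ (-3/4 : ℝ) * (1 - t) ^ (-1/2 : ℝ)))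
  rw [himg] at key
  rw [key]
  refine setIntegral_congr_fun measurableSet_Ioo (fun θ hθ => ?_)
  obtain ⟨h0, h2⟩ := hθ
  have hc : 0 < cos θ := cos_pos_of_mem_Ioo ⟨by linarith [pi_pos], h2⟩
  have hs : 0 < sin θ := sin_pos_of_pos_of_lt_pi h0 (by linarith [pi_pos])
  have hc1 : cos θ < 1 := by nlinarith [sin_sq_add_cos_sq θ]
  have habs : |4 * cos θ ^ 3 * (-sin θ)| = 4 * cos θ ^ 3 * sin θ := by
    rw [abs_of_nonpos (by nlinarith [pow_pos hc 3])]; ring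
  have e1 : (cos θ ^ 4 : ℝ) ^ (-3/4 : ℝ) = (cos θ ^ 3)⁻¹ := by
    rw [← Real.rpow_natCast (cos θ) 4, ← Real.rpow_mul hc.le,
      show ((4:ℕ):ℝ) * (-3/4) = -(3:ℕ) by norm_num, Real.rpow_neg hc.le,
      Real.rpow_natCast]
  have hfac : 1 - cos θ ^ 4 = sin θ ^ 2 * (1 + cos θ ^ 2) := by
    linear_combination (-(1 + cos θ ^ 2)) * sin_sq_add_cos_sq θ
  have h1c : (0:ℝ) < 1 + cos θ ^ 2 := by positivity
  have e2 : (1 - cos θ ^ 4 : ℝ) ^ (-1/2 : ℝ) = (sin θ * Real.sqrt (1 + cos θ ^ 2))⁻¹ := by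
    rw [show (-1/2 : ℝ) = -(1/2) by norm_num, Real.rpow_neg (by nlinarith),
      ← Real.sqrt_eq_rpow, hfac, Real.sqrt_mul (sq_nonneg _), Real.sqrt_sq hs.le]
  have e3 : 1 - (1 / Real.sqrt 2) ^ 2 * sin θ ^ 2 = (1 + cos θ ^ 2) / 2 := by
    rw [div_pow, one_pow, Real.sq_sqrt (by norm_num : (0:ℝ) ≤ 2)]
    linear_combination (-(1/2)) * sin_sq_add_cos_sq θ
  have hsq2 : Real.sqrt 2 > 0 := by positivity
  have hsqc : Real.sqrt (1 + cos θ ^ 2) > 0 := Real.sqrt_pos.2 h1c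
  simp only [smul_eq_mul]
  rw [habs, e1, e2, e3, Real.sqrt_div (by positivity) 2]
  have h2' : Real.sqrt 2 * Real.sqrt 2 = 2 := Real.mul_self_sqrt (by norm_num)
  field_simp

open MeasureTheory Set in
theorem ellK_one_div_sqrt_two :
    ellK (1 / Real.sqrt 2) = Real.Gamma (1 / 4) ^ 2 / (4 * Real.sqrt π) := by
  unfold ellK
  rw [intervalIntegral.integral_of_le (by positivity), integral_Ioc_eq_integral_Ioo,
    cov_step, integral_const_mul, beta_quarter_half, Real.Gamma_one_half_eq]
  have hA : 0 < Real.Gamma (1/4) := Real.Gamma_pos_of_pos (by norm_num)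
  have hB : 0 < Real.Gamma (3/4) := Real.Gamma_pos_of_pos (by norm_num)
  have hrefl := Real.Gamma_mul_Gamma_one_sub (1/4)
  rw [show (1:ℝ) - 1/4 = 3/4 by norm_num, show π * (1/4) = π/4 by ring,
    Real.sin_pi_div_four] at hrefl
  have h2 : Real.sqrt 2 * Real.sqrt 2 = 2 := Real.mul_self_sqrt (by norm_num)
  have hp : Real.sqrt π * Real.sqrt π = π := Real.mul_self_sqrt pi_pos.le
  have h2p : 0 < Real.sqrt 2 := by positivity
  have hpp : 0 < Real.sqrt π := Real.sqrt_pos.2 pi_pos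
  have hAB : Real.Gamma (1/4) * Real.Gamma (3/4) = Real.sqrt 2 * π := by
    rw [hrefl]; rw [div_div_eq_mul_div, div_eq_iff (by norm_num)]; nlinarith [h2]
  field_simp
  linear_combination (Real.sqrt 2) * hp - hAB
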